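/- Let α ∈ (0,1] and β = √(1−α²). Suppose f : ℝ → ℝ³ is twice continuously differentiable, satisfies |f(x)| = 1 for all x ∈ ℝ, and solves α f''(x) + α|f'(x)|² f(x) + β (f × f')'(x) − (x/2) f'(x) = 0 for all x ∈ ℝ. Then f also satisfies the identity f''(x) + |f'(x)|² f(x) − (x/2)·(α f'(x) − β f(x) × f'(x)) = 0 for all x ∈ ℝ. -/

import Mathlib

noncomputable section

open Real
open scoped RealInnerProductSpace

abbrev E3 := EuclideanSpace ℝ (Fin 3)

/-- The usual cross product on `ℝ³`. -/
def cross3 (u v : E3) : E3 :=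
  (WithLp.equiv 2 (Fin 3 → ℝ)).symm
    ![u 1 * v 2 - u 2 * v 1, u 2 * v 0 - u 0 * v 2, u 0 * v 1 - u 1 * v 0]

lemma cross3_apply (u v : E3) (i : Fin 3) :
    cross3 u v i = ![u 1 * v 2 - u 2 * v 1, u 2 * v 0 - u 0 * v 2, u 0 * v 1 - u 1 * v 0] i := rfl

lemma cross3_add_right (u v w : E3) : cross3 u (v + w) = cross3 u v + cross3 u w := by
  ext i
  fin_cases i <;>
    simp [cross3_apply, PiLp.add_apply] <;> ring

lemma cross3_smul_right (a : ℝ) (u v : E3) : cross3 u (a • v) = a • cross3 u v := by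
  ext i
  fin_cases i <;>
    simp [cross3_apply, PiLp.smul_apply, smul_eq_mul] <;> ring

lemma cross3_add_left (u v w : E3) : cross3 (u + v) w = cross3 u w + cross3 v w := by
  ext i
  fin_cases i <;> simp [cross3_apply, PiLp.add_apply] <;> ring

lemma cross3_smul_left (a : ℝ) (u v : E3) : cross3 (a • u) v = a • cross3 u v := by
  ext i
  fin_cases i <;> simp [cross3_apply, PiLp.smul_apply, smul_eq_mul] <;> ring

lemma cross3_self (u : E3) : cross3 u u = 0 := by
  ext i
  fin_cases i <;> simp [cross3_apply] <;> ring

lemma cross3_triple (u w : E3) :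
    cross3 u (cross3 u w) = ⟪u, w⟫ • u - ⟪u, u⟫ • w := by
  ext i
  fin_cases i <;>
    simp [cross3_apply, PiLp.inner_apply, Fin.sum_univ_three, PiLp.sub_apply,
      PiLp.smul_apply, smul_eq_mul, EuclideanSpace.norm_sq_eq, Real.norm_eq_abs, sq_abs] <;> ring

def crossL : E3 →L[ℝ] E3 →L[ℝ] E3 :=
  LinearMap.toContinuousLinearMap
    { toFun := fun u => LinearMap.toContinuousLinearMap
        { toFun := fun v => cross3 u v
          map_add' := fun v w => cross3_add_right u v w
          map_smul' := fun a v => cross3_smul_right a u v }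
      map_add' := fun u v => by
        ext w
        simp [cross3_add_left, PiLp.add_apply]
      map_smul' := fun a u => by
        ext w
        simp [cross3_smul_left, PiLp.smul_apply] }

lemma crossL_apply (u v : E3) : crossL u v = cross3 u v := rfl

lemma hasDerivAt_cross {u v : ℝ → E3} {u' v' : E3} {x : ℝ}
    (hu : HasDerivAt u u' x) (hv : HasDerivAt v v' x) :
    HasDerivAt (fun y => cross3 (u y) (v y)) (cross3 u' (v x) + cross3 (u x) v') x := by
  have hc : HasDerivAt (fun y => crossL (u y)) (crossL u') x :=
    crossL.hasFDerivAt.comp_hasDerivAt x hu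
  simpa [crossL_apply] using hc.clm_apply hv

lemma cross3_zero_right (u : E3) : cross3 u 0 = 0 := by
  ext i
  fin_cases i <;> simp [cross3_apply]

lemma cross3_sub_right (u v w : E3) : cross3 u (v - w) = cross3 u v - cross3 u w := by
  ext i
  fin_cases i <;> simp [cross3_apply, PiLp.sub_apply] <;> ring

theorem stmt1 (α β : ℝ) (hα : α ∈ Set.Ioc (0 : ℝ) 1) (hβ : β = Real.sqrt (1 - α ^ 2))
    (f : ℝ → E3) (hf : ContDiff ℝ 2 f) (hunit : ∀ x : ℝ, ‖f x‖ = 1)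
    (heq : ∀ x : ℝ,
      α • deriv (deriv f) x + (α * ‖deriv f x‖ ^ 2) • f x
        + β • deriv (fun y => cross3 (f y) (deriv f y)) x - (x / 2) • deriv f x = 0) :
    ∀ x : ℝ,
      deriv (deriv f) x + (‖deriv f x‖ ^ 2) • f x
        - (x / 2) • (α • deriv f x - β • cross3 (f x) (deriv f x)) = 0 := by
  have hf2 : ContDiff ℝ (1 + 1) f := by exact_mod_cast hf
  have hfd : Differentiable ℝ f := hf.differentiable (by norm_num)
  have hf'cd : ContDiff ℝ 1 (deriv f) := (contDiff_succ_iff_deriv.mp hf2).2.2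
  have hf'd : Differentiable ℝ (deriv f) := hf'cd.differentiable one_ne_zero
  have hder : ∀ x : ℝ, HasDerivAt f (deriv f x) x := fun x => (hfd x).hasDerivAt
  have hder' : ∀ x : ℝ, HasDerivAt (deriv f) (deriv (deriv f) x) x :=
    fun x => (hf'd x).hasDerivAt
  have hαβ : α ^ 2 + β ^ 2 = 1 := by
    have h1 : (0:ℝ) ≤ 1 - α ^ 2 := by nlinarith [hα.1, hα.2]
    rw [hβ, sq_sqrt h1]; ring
  have hii : ∀ x : ℝ, ⟪f x, f x⟫ = 1 := by
    intro x
    rw [real_inner_self_eq_norm_sq, hunit x]; norm_num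
  have hff' : ∀ x : ℝ, ⟪f x, deriv f x⟫ = 0 := by
    intro x
    have h1 : HasDerivAt (fun y => ⟪f y, f y⟫)
        (⟪f x, deriv f x⟫ + ⟪deriv f x, f x⟫) x := (hder x).inner ℝ (hder x)
    have h2 : (fun y => ⟪f y, f y⟫) = fun _ => (1:ℝ) := funext fun y => hii y
    rw [h2] at h1
    have h3 := (hasDerivAt_const x (1:ℝ)).unique h1
    have h4 := real_inner_comm (f x) (deriv f x)
    linarith
  have hff'' : ∀ x : ℝ, ⟪f x, deriv (deriv f) x⟫ = -‖deriv f x‖ ^ 2 := by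
    intro x
    have h1 : HasDerivAt (fun y => ⟪f y, deriv f y⟫)
        (⟪f x, deriv (deriv f) x⟫ + ⟪deriv f x, deriv f x⟫) x :=
      (hder x).inner ℝ (hder' x)
    have h2 : (fun y => ⟪f y, deriv f y⟫) = fun _ => (0:ℝ) := funext fun y => hff' y
    rw [h2] at h1
    have h3 := (hasDerivAt_const x (0:ℝ)).unique h1
    rw [real_inner_self_eq_norm_sq] at h3
    linarith
  intro x
  have hD : deriv (fun y => cross3 (f y) (deriv f y)) x = cross3 (f x) (deriv (deriv f) x) := by
    have h1 : HasDerivAt (fun y => cross3 (f y) (deriv f y))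
        (cross3 (deriv f x) (deriv f x) + cross3 (f x) (deriv (deriv f) x)) x :=
      hasDerivAt_cross (hder x) (hder' x)
    rw [h1.deriv, cross3_self, zero_add]
  have eq1 : α • deriv (deriv f) x + (α * ‖deriv f x‖ ^ 2) • f x
      + β • cross3 (f x) (deriv (deriv f) x) - (x / 2) • deriv f x = 0 := by
    rw [← hD]; exact heq x
  have eq2 : α • cross3 (f x) (deriv (deriv f) x)
      + β • ((-‖deriv f x‖ ^ 2) • f x - (1:ℝ) • deriv (deriv f) x)
      - (x / 2) • cross3 (f x) (deriv f x) = 0 := by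
    have h := congrArg (fun v => cross3 (f x) v) eq1
    simp only [cross3_add_right, cross3_sub_right, cross3_smul_right] at h
    rw [cross3_triple, hii x, hff'' x, cross3_self, smul_zero, add_zero] at h
    simpa [cross3_zero_right] using h
  have key : (α ^ 2 + β ^ 2) • (deriv (deriv f) x + (‖deriv f x‖ ^ 2) • f x)
      = (x / 2) • (α • deriv f x - β • cross3 (f x) (deriv f x)) := by
    linear_combination (norm := module) α • eq1 - β • eq2
  rw [hαβ, one_smul] at key
  rw [key, sub_self]
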